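/- Let Ω be a nonempty closed convex subset of H, let V : H → H be ℓ-strongly pseudomonotone and M-Lipschitz continuous, let 0 < ν < 4ℓ/M², and set κ1 = 1 − νM²/(4ℓ) and κ2 = νℓ/(1 + νℓ + νM). Let x* ∈ Ω be a solution of the variational inequality VI(V,Ω). Then for every v̄ ∈ H: ⟨v̄ − Π_Ω(v̄ − νV(v̄)), v̄ − x*⟩ ≥ κ1‖v̄ − Π_Ω(v̄ − νV(v̄))‖² and ‖v̄ − Π_Ω(v̄ − νV(v̄))‖ ≥ κ2‖v̄ − x*‖. -/
import Mathlib


open InnerProductSpace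

theorem stmt11
    {H : Type*} [NormedAddCommGroup H] [InnerProductSpace ℝ H] [CompleteSpace H]
    (Ω : Set H) (hne : Ω.Nonempty) (hcl : IsClosed Ω) (hconv : Convex ℝ Ω)
    (V : H → H) (ℓ M ν : ℝ) (hℓ : 0 < ℓ) (hM : 0 < M)
    (hpm : ∀ x y : H, 0 ≤ ⟪V y, x - y⟫_ℝ → ℓ * ‖x - y‖ ^ 2 ≤ ⟪V x, x - y⟫_ℝ)
    (hLip : ∀ x y : H, ‖V x - V y‖ ≤ M * ‖x - y‖)
    (hν : 0 < ν) (hν' : ν < 4 * ℓ / M ^ 2)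
    (proj : H → H)
    (hproj : ∀ v : H, proj v ∈ Ω ∧ ∀ y ∈ Ω, ⟪v - proj v, y - proj v⟫_ℝ ≤ 0)
    (xs : H) (hxsΩ : xs ∈ Ω) (hxs : ∀ y ∈ Ω, 0 ≤ ⟪V xs, y - xs⟫_ℝ) :
    ∀ v : H,
      (1 - ν * M ^ 2 / (4 * ℓ)) * ‖v - proj (v - ν • V v)‖ ^ 2 ≤
        ⟪v - proj (v - ν • V v), v - xs⟫_ℝ ∧
      ν * ℓ / (1 + ν * ℓ + ν * M) * ‖v - xs‖ ≤ ‖v - proj (v - ν • V v)‖ := by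
  intro v
  set p := proj (v - ν • V v) with hp_def
  obtain ⟨hpΩ, hpineq⟩ := hproj (v - ν • V v)
  set R := ‖v - p‖ with hR_def
  set t := ‖p - xs‖ with ht_def
  have hR0 : 0 ≤ R := norm_nonneg _
  have ht0 : 0 ≤ t := norm_nonneg _
  -- projection inequality at xs
  have h1 : ⟪(v - ν • V v) - p, xs - p⟫_ℝ ≤ 0 := hpineq xs hxsΩ
  have h1' : 0 ≤ ⟪(v - ν • V v) - p, p - xs⟫_ℝ := by
    have : ⟪(v - ν • V v) - p, p - xs⟫_ℝ = -⟪(v - ν • V v) - p, xs - p⟫_ℝ := by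
      rw [show p - xs = -(xs - p) by abel, inner_neg_right]
    linarith [this ▸ neg_nonneg.mpr h1]
  -- strong pseudomonotonicity at p
  have h2 : ℓ * t ^ 2 ≤ ⟪V p, p - xs⟫_ℝ := hpm p xs (hxs p hpΩ)
  -- Lipschitz bound
  have h3 : -(M * R * t) ≤ ⟪V v - V p, p - xs⟫_ℝ := by
    have habs := abs_real_inner_le_norm (V v - V p) (p - xs)
    have hlip := hLip v p
    have hna := neg_abs_le ⟪V v - V p, p - xs⟫_ℝ
    nlinarith [norm_nonneg (V v - V p)]
  -- key estimate A
  have hexp : ⟪v - p, p - xs⟫_ℝ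
      = ⟪(v - ν • V v) - p, p - xs⟫_ℝ + ν * ⟪V p, p - xs⟫_ℝ
        + ν * ⟪V v - V p, p - xs⟫_ℝ := by
    rw [inner_sub_left, inner_sub_left, inner_sub_left, inner_sub_left,
      real_inner_smul_left]
    ring
  have hA : ν * ℓ * t ^ 2 - ν * M * R * t ≤ ⟪v - p, p - xs⟫_ℝ := by
    rw [hexp]
    nlinarith [mul_le_mul_of_nonneg_left h2 hν.le, mul_le_mul_of_nonneg_left h3 hν.le]
  -- decomposition of the inner product
  have hsum : ⟪v - p, v - xs⟫_ℝ = R ^ 2 + ⟪v - p, p - xs⟫_ℝ := by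
    rw [hR_def, ← real_inner_self_eq_norm_sq, ← inner_add_right]
    congr 1
    abel
  constructor
  · -- first inequality
    have hkey : ν * M ^ 2 / (4 * ℓ) * R ^ 2 + (ν * ℓ * t ^ 2 - ν * M * R * t)
        = ν * (ℓ * t - M * R / 2) ^ 2 / ℓ := by
      field_simp
      ring
    have hpos : 0 ≤ ν * (ℓ * t - M * R / 2) ^ 2 / ℓ := by positivity
    rw [hsum]
    nlinarith
  · -- second inequality
    have hCS : ⟪v - p, p - xs⟫_ℝ ≤ R * t := real_inner_le_norm _ _
    have hB : ν * ℓ * t ≤ (1 + ν * M) * R := by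
      rcases eq_or_lt_of_le ht0 with h0 | h0
      · rw [← h0]
        have h5 : (0:ℝ) ≤ (1 + ν * M) * R := by positivity
        linarith
      · nlinarith
    have htri : ‖v - xs‖ ≤ R + t := by
      have h := norm_add_le (v - p) (p - xs)
      rw [show (v - p) + (p - xs) = v - xs by abel] at h
      exact h
    rw [div_mul_eq_mul_div, div_le_iff₀ (by positivity)]
    nlinarith [mul_pos hν hℓ, mul_le_mul_of_nonneg_left htri (mul_pos hν hℓ).le]
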